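/- Fix λ > 0 and let f(φ) = φ · ((√((φ+λ-1)²+4λ) - (φ+λ-1)) / (√((φ+λ-1)²+4λ) - (φ-λ-1)))² for φ > 0. Then f is strictly increasing on (0, λ+1) and strictly decreasing on (λ+1, ∞). -/

import Mathlib

noncomputable def vfH (lam φ : ℝ) : ℝ := φ + (lam + 1) ^ 2 / φ + 2 * lam

lemma vfH_gt_two (lam φ : ℝ) (hlam : 0 < lam) (hφ : 0 < φ) : 2 < vfH lam φ := by
  have h1 : 2 * (lam + 1) - φ ≤ (lam + 1) ^ 2 / φ := by
    rw [le_div_iff₀ hφ]; nlinarith [sq_nonneg (lam + 1 - φ)]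
  unfold vfH; linarith

lemma vf_key (lam φ : ℝ) (hlam : 0 < lam) (hφ : 0 < φ) :
    φ * ((Real.sqrt ((φ + lam - 1) ^ 2 + 4 * lam) - (φ + lam - 1)) /
          (Real.sqrt ((φ + lam - 1) ^ 2 + 4 * lam) - (φ - lam - 1))) ^ 2
      = 2 / (vfH lam φ + Real.sqrt ((vfH lam φ) ^ 2 - 4)) := by
  set S := Real.sqrt ((φ + lam - 1) ^ 2 + 4 * lam) with hSdef
  have hS2 : S ^ 2 = (φ + lam - 1) ^ 2 + 4 * lam := Real.sq_sqrt (by positivity)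
  have hSpos : 0 < S := Real.sqrt_pos.mpr (by positivity)
  have hSb : φ - lam - 1 < S := by nlinarith [mul_pos hlam hφ]
  have hb : S - (φ - lam - 1) ≠ 0 := ne_of_gt (by linarith)
  have hc : 0 < φ + lam + 1 := by linarith
  have hs4 : (vfH lam φ) ^ 2 - 4 = (S * (φ + lam + 1) / φ) ^ 2 := by
    unfold vfH
    field_simp
    linear_combination -(φ + lam + 1) ^ 2 * hS2
  rw [hs4, Real.sqrt_sq (by positivity)]
  have hre : vfH lam φ + S * (φ + lam + 1) / φ
      = ((φ + lam + 1) ^ 2 - 2 * φ + S * (φ + lam + 1)) / φ := by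
    unfold vfH; field_simp; ring
  have hD : 0 < (φ + lam + 1) ^ 2 - 2 * φ + S * (φ + lam + 1) := by
    nlinarith [mul_pos hSpos hc]
  rw [hre, div_div_eq_mul_div, div_pow, eq_div_iff (ne_of_gt hD)]
  field_simp
  linear_combination (φ * ((φ + lam + 1) * S - (φ + lam - 1) ^ 2
      - 2 * (φ + lam - 1) + 2 * lam)
      + (S - S * φ * lam - S * φ ^ 2 + S * lam + 1 - φ - 4 * φ * lam + φ * lam ^ 2 - φ ^ 2
      + 2 * φ ^ 2 * lam + φ ^ 3 + 2 * lam - lam ^ 2)) * hS2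

lemma vf_step (lam x y : ℝ) (hx2 : 2 < vfH lam x) (hy2 : 2 < vfH lam y)
    (hH : vfH lam y < vfH lam x) :
    2 / (vfH lam x + Real.sqrt ((vfH lam x) ^ 2 - 4))
      < 2 / (vfH lam y + Real.sqrt ((vfH lam y) ^ 2 - 4)) := by
  have hs : Real.sqrt ((vfH lam y) ^ 2 - 4) ≤ Real.sqrt ((vfH lam x) ^ 2 - 4) :=
    Real.sqrt_le_sqrt (by nlinarith)
  have h0 : 0 < vfH lam y + Real.sqrt ((vfH lam y) ^ 2 - 4) := by
    have := Real.sqrt_nonneg ((vfH lam y) ^ 2 - 4); linarith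
  exact div_lt_div_of_pos_left two_pos h0 (by linarith)

/-- Non-monotonicity of the isotropic variance factor: for fixed `λ > 0`,
`f(φ) = φ ((√((φ+λ-1)²+4λ) - (φ+λ-1))/(√((φ+λ-1)²+4λ) - (φ-λ-1)))²` is
strictly increasing on `(0, λ+1)` and strictly decreasing on `(λ+1, ∞)`. -/
theorem variance_factor_nonmonotone (lam : ℝ) (hlam : 0 < lam) :
    StrictMonoOn
      (fun φ : ℝ => φ *
        ((Real.sqrt ((φ + lam - 1) ^ 2 + 4 * lam) - (φ + lam - 1)) /
          (Real.sqrt ((φ + lam - 1) ^ 2 + 4 * lam) - (φ - lam - 1))) ^ 2)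
      (Set.Ioo 0 (lam + 1)) ∧
    StrictAntiOn
      (fun φ : ℝ => φ *
        ((Real.sqrt ((φ + lam - 1) ^ 2 + 4 * lam) - (φ + lam - 1)) /
          (Real.sqrt ((φ + lam - 1) ^ 2 + 4 * lam) - (φ - lam - 1))) ^ 2)
      (Set.Ioi (lam + 1)) := by
  have hdiff : ∀ x y : ℝ, 0 < x → 0 < y →
      vfH lam x - vfH lam y = (x - y) * (x * y - (lam + 1) ^ 2) / (x * y) := by
    intro x y hx hy
    unfold vfH
    field_simp
    ring
  constructor
  · intro x hx y hy hxy
    have hx0 := hx.1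
    have hy0 := hy.1
    have hH : vfH lam y < vfH lam x := by
      have h1 := hdiff x y hx0 hy0
      have h2 : 0 < (x - y) * (x * y - (lam + 1) ^ 2) / (x * y) := by
        apply div_pos _ (mul_pos hx0 hy0)
        have : x * y < (lam + 1) ^ 2 := by nlinarith [hx.2, hy.2]
        nlinarith
      linarith
    dsimp only
    rw [vf_key lam x hlam hx0, vf_key lam y hlam hy0]
    exact vf_step lam x y (vfH_gt_two lam x hlam hx0) (vfH_gt_two lam y hlam hy0) hH
  · intro x hx y hy hxy
    have hx0 : 0 < x := lt_trans (by linarith) hx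
    have hy0 : 0 < y := lt_trans (by linarith) hy
    have hx1 : lam + 1 < x := hx
    have hy1 : lam + 1 < y := hy
    have hH : vfH lam x < vfH lam y := by
      have h1 := hdiff y x hy0 hx0
      have h2 : 0 < (y - x) * (y * x - (lam + 1) ^ 2) / (y * x) := by
        apply div_pos _ (mul_pos hy0 hx0)
        have : (lam + 1) ^ 2 < y * x := by nlinarith
        nlinarith
      linarith
    dsimp only
    rw [vf_key lam x hlam hx0, vf_key lam y hlam hy0]
    exact vf_step lam y x (vfH_gt_two lam y hlam hy0) (vfH_gt_two lam x hlam hx0) hH
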